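/- There is a bijection between Dyck paths with air pockets of length m ending at height 0 and ordinary Dyck paths (up-steps (1,1), down-steps (1,−1), never below the x-axis, ending on the x-axis) whose number of up-steps plus number of maximal runs of down-steps equals m: namely, compressing each maximal run of consecutive down-steps of an ordinary Dyck path into a single down-step (1,−k) of the same total drop k. -/

import Mathlib

/-- Dyck path with air pockets (see STATEMENT 3's definition). -/
def IsDyckAirPocket (l : List ℤ) : Prop :=
  (∀ x ∈ l, x = 1 ∨ x ≤ -1) ∧
  l.Chain' (fun a b => a ≤ -1 → b = 1) ∧
  (∀ p : List ℤ, p <+: l → 0 ≤ p.sum) ∧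
  l.sum = 0

/-- Ordinary Dyck path: steps ±1, never below the x-axis, ending on it. -/
def IsDyck (l : List ℤ) : Prop :=
  (∀ x ∈ l, x = 1 ∨ x = -1) ∧
  (∀ p : List ℤ, p <+: l → 0 ≤ p.sum) ∧
  l.sum = 0

/-- Compress each maximal run of consecutive negative steps into a single
step of the same total (negative) displacement. -/
def compress : List ℤ → List ℤ
  | [] => []
  | a :: l =>
    match compress l with
    | [] => [a]
    | b :: t => if a < 0 ∧ b < 0 then (a + b) :: t else a :: b :: t

/-- The inverse of `compress`. -/
def expand : List ℤ → List ℤ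
  | [] => []
  | a :: l => (if a < 0 then List.replicate (-a).toNat (-1) else [a]) ++ expand l

lemma compress_sum (l : List ℤ) : (compress l).sum = l.sum := by
  induction l with
  | nil => rfl
  | cons a l ih =>
    cases h : compress l with
    | nil =>
      simp only [compress, h, List.sum_cons, List.sum_nil]
      rw [h] at ih; simp at ih; omega
    | cons b t =>
      rw [h] at ih
      simp only [compress, h]
      split_ifs with hb
      · simp only [List.sum_cons] at ih ⊢; omega
      · simp only [List.sum_cons] at ih ⊢; omega

lemma compress_prefix_sum {l p : List ℤ} (hp : p <+: compress l) :
    ∃ q, q <+: l ∧ q.sum = p.sum := by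
  induction l generalizing p with
  | nil =>
    rw [List.prefix_nil.mp hp]
    exact ⟨[], List.nil_prefix, rfl⟩
  | cons a l ih =>
    cases h : compress l with
    | nil =>
      rw [show compress (a :: l) = [a] by simp [compress, h]] at hp
      rcases p with _ | ⟨c, p'⟩
      · exact ⟨[], List.nil_prefix, rfl⟩
      · obtain ⟨hc, hp'⟩ := List.cons_prefix_cons.mp hp
        rw [List.prefix_nil.mp hp', hc]
        exact ⟨[a], ⟨l, rfl⟩, rfl⟩
    | cons b t =>
      rw [show compress (a :: l) = if a < 0 ∧ b < 0 then (a + b) :: t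
            else a :: b :: t by simp [compress, h]] at hp
      split_ifs at hp with hb
      · rcases p with _ | ⟨c, p'⟩
        · exact ⟨[], List.nil_prefix, rfl⟩
        · obtain ⟨hc, hp'⟩ := List.cons_prefix_cons.mp hp
          have : b :: p' <+: compress l := by
            rw [h]; exact List.cons_prefix_cons.mpr ⟨rfl, hp'⟩
          obtain ⟨q, hq, hqs⟩ := ih this
          refine ⟨a :: q, List.cons_prefix_cons.mpr ⟨rfl, hq⟩, ?_⟩
          simp only [List.sum_cons] at hqs ⊢
          omega
      · rcases p with _ | ⟨c, p'⟩
        · exact ⟨[], List.nil_prefix, rfl⟩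
        · obtain ⟨hc, hp'⟩ := List.cons_prefix_cons.mp hp
          have : p' <+: compress l := by rw [h]; exact hp'
          obtain ⟨q, hq, hqs⟩ := ih this
          refine ⟨a :: q, List.cons_prefix_cons.mpr ⟨rfl, hq⟩, ?_⟩
          simp only [List.sum_cons] at hqs ⊢
          omega

lemma compress_mem {l : List ℤ} (h : ∀ x ∈ l, x = 1 ∨ x = -1) :
    ∀ x ∈ compress l, x = 1 ∨ x ≤ -1 := by
  induction l with
  | nil => simp [compress]
  | cons a l ih =>
    have ha := h a (by simp)
    have hl : ∀ x ∈ l, x = 1 ∨ x = -1 := fun x hx => h x (by simp [hx])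
    cases hc : compress l with
    | nil =>
      rw [show compress (a :: l) = [a] by simp [compress, hc]]
      intro x hx; simp at hx; subst hx; omega
    | cons b t =>
      have hb : b = 1 ∨ b ≤ -1 := by
        have := ih hl b (by rw [hc]; simp)
        exact this
      rw [show compress (a :: l) = if a < 0 ∧ b < 0 then (a + b) :: t
            else a :: b :: t by simp [compress, hc]]
      split_ifs with hab
      · intro x hx
        rcases List.mem_cons.mp hx with rfl | hx
        · right; omega
        · exact ih hl x (by rw [hc]; simp [hx])
      · intro x hx
        rcases List.mem_cons.mp hx with rfl | hx
        · omega
        · exact ih hl x (by rw [hc]; simp at hx ⊢; tauto)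

lemma compress_chain {l : List ℤ} (h : ∀ x ∈ l, x = 1 ∨ x = -1) :
    (compress l).Chain' (fun a b => a ≤ -1 → b = 1) := by
  induction l with
  | nil => simp [compress, List.Chain']
  | cons a l ih =>
    have hl : ∀ x ∈ l, x = 1 ∨ x = -1 := fun x hx => h x (by simp [hx])
    have IH := ih hl
    cases hc : compress l with
    | nil =>
      rw [show compress (a :: l) = [a] by simp [compress, hc]]
      simp [List.Chain']
    | cons b t =>
      rw [hc] at IH
      rw [show compress (a :: l) = if a < 0 ∧ b < 0 then (a + b) :: t
            else a :: b :: t by simp [compress, hc]]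
      split_ifs with hab
      · obtain ⟨h1, h2⟩ := List.isChain_cons.mp IH
        refine List.isChain_cons.mpr ⟨?_, h2⟩
        intro y hy _
        exact h1 y hy (by omega)
      · refine List.isChain_cons.mpr ⟨?_, IH⟩
        intro y hy hale
        simp at hy; subst hy
        have hb : b = 1 ∨ b ≤ -1 := compress_mem hl b (by rw [hc]; simp)
        omega

lemma expand_mem {l : List ℤ} (h : ∀ x ∈ l, x = 1 ∨ x ≤ -1) :
    ∀ x ∈ expand l, x = 1 ∨ x = -1 := by
  induction l with
  | nil => simp [expand]
  | cons a l ih =>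
    have ha := h a (by simp)
    have hl : ∀ x ∈ l, x = 1 ∨ x ≤ -1 := fun x hx => h x (by simp [hx])
    intro x hx
    simp only [expand, List.mem_append] at hx
    rcases hx with hx | hx
    · split_ifs at hx with haneg
      · right; exact List.eq_of_mem_replicate hx
      · simp at hx; subst hx; left; omega
    · exact ih hl x hx

lemma replicate_neg_one_sum (n : ℕ) : (List.replicate n (-1 : ℤ)).sum = -(n : ℤ) := by
  rw [List.sum_replicate]; simp

lemma expand_sum {l : List ℤ} (h : ∀ x ∈ l, x = 1 ∨ x ≤ -1) :
    (expand l).sum = l.sum := by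
  induction l with
  | nil => rfl
  | cons a l ih =>
    have ha := h a (by simp)
    have hl : ∀ x ∈ l, x = 1 ∨ x ≤ -1 := fun x hx => h x (by simp [hx])
    simp only [expand, List.sum_append, List.sum_cons, ih hl]
    split_ifs with haneg
    · rw [replicate_neg_one_sum]
      have : ((-a).toNat : ℤ) = -a := Int.toNat_of_nonneg (by omega)
      omega
    · simp

lemma prefix_append_cases {α : Type*} {p x y : List α} (h : p <+: x ++ y) :
    p <+: x ∨ ∃ p', p = x ++ p' ∧ p' <+: y := by
  induction x generalizing p with
  | nil => right; exact ⟨p, rfl, h⟩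
  | cons a x ih =>
    rcases p with _ | ⟨c, p'⟩
    · left; exact List.nil_prefix
    · obtain ⟨hc, hp'⟩ := List.cons_prefix_cons.mp h
      subst hc
      rcases ih hp' with h1 | ⟨p'', rfl, h2⟩
      · left; exact List.cons_prefix_cons.mpr ⟨rfl, h1⟩
      · right; exact ⟨p'', rfl, h2⟩

lemma prefix_replicate {α : Type*} {p : List α} {n : ℕ} {c : α}
    (h : p <+: List.replicate n c) : p = List.replicate p.length c ∧ p.length ≤ n := by
  constructor
  · exact List.eq_replicate_of_mem fun b hb =>
      List.eq_of_mem_replicate (h.subset hb)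
  · have := h.length_le
    simpa using this

lemma expand_prefix {l : List ℤ} (h : ∀ x ∈ l, x = 1 ∨ x ≤ -1) :
    ∀ p, p <+: expand l → ∃ q, q <+: l ∧ q.sum ≤ p.sum := by
  induction l with
  | nil =>
    intro p hp
    rw [List.prefix_nil.mp hp]
    exact ⟨[], List.nil_prefix, le_refl _⟩
  | cons a l ih =>
    have ha := h a (by simp)
    have hl : ∀ x ∈ l, x = 1 ∨ x ≤ -1 := fun x hx => h x (by simp [hx])
    intro p hp
    simp only [expand] at hp
    split_ifs at hp with haneg
    · rcases prefix_append_cases hp with h1 | ⟨p', rfl, h2⟩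
      · obtain ⟨hrep, hlen⟩ := prefix_replicate h1
        refine ⟨[a], List.cons_prefix_cons.mpr ⟨rfl, List.nil_prefix⟩, ?_⟩
        rw [hrep, replicate_neg_one_sum]
        simp only [List.sum_cons, List.sum_nil, add_zero]
        omega
      · obtain ⟨q, hq, hqs⟩ := ih hl p' h2
        refine ⟨a :: q, List.cons_prefix_cons.mpr ⟨rfl, hq⟩, ?_⟩
        rw [List.sum_append, replicate_neg_one_sum]
        simp only [List.sum_cons]
        have : ((-a).toNat : ℤ) = -a := Int.toNat_of_nonneg (by omega)
        omega
    · have ha1 : a = 1 := by omega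
      rcases prefix_append_cases hp with h1 | ⟨p', rfl, h2⟩
      · rcases (List.prefix_iff_eq_take.mp h1) with h3
        -- p is a prefix of [a], so p = [] or p = [a]
        rcases p with _ | ⟨c, p'⟩
        · exact ⟨[], List.nil_prefix, le_refl _⟩
        · obtain ⟨hc, hp'⟩ := List.cons_prefix_cons.mp h1
          rw [List.prefix_nil.mp hp', hc]
          exact ⟨[a], List.cons_prefix_cons.mpr ⟨rfl, List.nil_prefix⟩, le_refl _⟩
      · obtain ⟨q, hq, hqs⟩ := ih hl p' h2
        refine ⟨a :: q, List.cons_prefix_cons.mpr ⟨rfl, hq⟩, ?_⟩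
        simp only [List.sum_append, List.sum_cons, List.sum_nil, add_zero]
        omega

lemma expand_compress {l : List ℤ} (h : ∀ x ∈ l, x = 1 ∨ x = -1) :
    expand (compress l) = l := by
  induction l with
  | nil => rfl
  | cons a l ih =>
    have ha := h a (by simp)
    have hl : ∀ x ∈ l, x = 1 ∨ x = -1 := fun x hx => h x (by simp [hx])
    have IH := ih hl
    cases hc : compress l with
    | nil =>
      rw [hc] at IH
      have hlnil : l = [] := by simpa [expand] using IH.symm
      rw [show compress (a :: l) = [a] by simp [compress, hc], hlnil]
      rcases ha with rfl | rfl
      · simp [expand]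
      · simp [expand]
    | cons b t =>
      rw [hc] at IH
      rw [show compress (a :: l) = if a < 0 ∧ b < 0 then (a + b) :: t
            else a :: b :: t by simp [compress, hc]]
      split_ifs with hab
      · obtain ⟨haneg, hbneg⟩ := hab
        have ha1 : a = -1 := by omega
        have habneg : a + b < 0 := by omega
        simp only [expand, if_pos habneg, if_pos hbneg] at IH ⊢
        have htoNat : (-(a + b)).toNat = (-b).toNat + 1 := by omega
        rw [htoNat]
        rw [show List.replicate ((-b).toNat + 1) (-1 : ℤ)
            = -1 :: List.replicate (-b).toNat (-1) from
          (List.replicate_succ (a := (-1 : ℤ)) (n := (-b).toNat))]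
        rw [List.cons_append, IH, ha1]
      · rw [show expand (a :: b :: t)
            = (if a < 0 then List.replicate (-a).toNat (-1) else [a]) ++ expand (b :: t)
            from rfl, IH]
        rcases ha with rfl | rfl
        · norm_num
        · norm_num [show ((-(-1:ℤ)).toNat) = 1 from rfl, List.replicate_one]

lemma compress_replicate_append {r : List ℤ}
    (hr : ∀ y ∈ (compress r).head?, (0:ℤ) ≤ y) :
    ∀ n : ℕ, 1 ≤ n →
      compress (List.replicate n (-1) ++ r) = (-(n:ℤ)) :: compress r := by
  intro n hn
  induction n with
  | zero => omega
  | succ n ihn =>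
    rcases Nat.eq_or_lt_of_le hn with h1 | h1
    · -- n + 1 = 1, i.e. n = 0
      have hn0 : n = 0 := by omega
      subst hn0
      rw [show List.replicate (0+1) (-1:ℤ) ++ r = (-1) :: r from rfl]
      cases hc : compress r with
      | nil => simp [compress, hc]
      | cons b t =>
        have hb : (0:ℤ) ≤ b := hr b (by rw [hc]; rfl)
        rw [show compress ((-1) :: r) = if (-1:ℤ) < 0 ∧ b < 0 then (-1 + b) :: t
              else (-1) :: b :: t by simp [compress, hc]]
        rw [if_neg (by omega), ← hc]
        norm_num
    · have hn' : 1 ≤ n := by omega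
      have IH := ihn hn'
      rw [List.replicate_succ, List.cons_append]
      rw [show compress ((-1) :: (List.replicate n (-1) ++ r))
            = if (-1:ℤ) < 0 ∧ (-(n:ℤ)) < 0 then ((-1) + (-(n:ℤ))) :: compress r
              else (-1) :: (-(n:ℤ)) :: compress r by simp [compress, IH]]
      rw [if_pos (by constructor <;> [omega; omega])]
      congr 1
      push_cast
      ring

lemma compress_expand {l : List ℤ} (hm : ∀ x ∈ l, x = 1 ∨ x ≤ -1)
    (hc : l.Chain' (fun a b => a ≤ -1 → b = 1)) :
    compress (expand l) = l := by
  induction l with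
  | nil => rfl
  | cons a l ih =>
    have ha := hm a (by simp)
    have hl : ∀ x ∈ l, x = 1 ∨ x ≤ -1 := fun x hx => hm x (by simp [hx])
    obtain ⟨hhead, hctail⟩ := List.isChain_cons.mp hc
    have IH := ih hl hctail
    rcases ha with rfl | haneg
    · simp only [expand, if_neg (by norm_num : ¬ (1:ℤ) < 0), List.cons_append,
        List.nil_append]
      cases hce : compress (expand l) with
      | nil =>
        have : l = [] := by rw [hce] at IH; exact IH.symm
        subst this
        rfl
      | cons b t =>
        rw [show compress (1 :: expand l) = if (1:ℤ) < 0 ∧ b < 0 then (1 + b) :: t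
              else 1 :: b :: t by simp [compress, hce]]
        rw [if_neg (by norm_num), ← hce, IH]
    · have hhead' : ∀ y ∈ (compress (expand l)).head?, (0:ℤ) ≤ y := by
        intro y hy
        rw [IH] at hy
        have := hhead y hy haneg
        omega
      simp only [expand, if_pos (by omega : a < 0)]
      rw [compress_replicate_append hhead' (-a).toNat (by omega), IH]
      congr 1
      have : ((-a).toNat : ℤ) = -a := Int.toNat_of_nonneg (by omega)
      omega

theorem stmt4 (m : ℕ) :
    Set.BijOn compress
      {l : List ℤ | IsDyck l ∧ (compress l).length = m}
      {l : List ℤ | IsDyckAirPocket l ∧ l.length = m} := by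
  refine ⟨?_, ?_, ?_⟩
  · rintro l ⟨⟨hmem, hpre, hsum⟩, hlen⟩
    refine ⟨⟨compress_mem hmem, compress_chain hmem, ?_, ?_⟩, hlen⟩
    · intro p hp
      obtain ⟨q, hq, hqs⟩ := compress_prefix_sum hp
      rw [← hqs]
      exact hpre q hq
    · rw [compress_sum]; exact hsum
  · rintro x ⟨⟨hx, _, _⟩, _⟩ y ⟨⟨hy, _, _⟩, _⟩ hxy
    have := congrArg expand hxy
    rwa [expand_compress hx, expand_compress hy] at this
  · rintro l ⟨⟨hmem, hchain, hpre, hsum⟩, hlen⟩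
    refine ⟨expand l, ⟨⟨expand_mem hmem, ?_, ?_⟩, ?_⟩, ?_⟩
    · intro p hp
      obtain ⟨q, hq, hqs⟩ := expand_prefix hmem p hp
      exact le_trans (hpre q hq) hqs
    · rw [expand_sum hmem]; exact hsum
    · rw [compress_expand hmem hchain, hlen]
    · exact compress_expand hmem hchain
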